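/- arXiv:2403.07768 — 2 statements merged into one kernel-verified Lean document; each statement's English description precedes it below -/
import Mathlib

section
/- Let B be a braided monoidal category and x an object of B admitting a left dual ˣ⃗x. If x lies in the Müger center of B (i.e. the double braiding with every object is the identity), then ˣ⃗x also lies in the Müger center. -/
open CategoryTheory MonoidalCategory

section
variable {B' : Type*} [Category B'] [MonoidalCategory B'] [BraidedCategory B']
  (x xd : B') [ExactPairing x xd] (y : B')

open Category BraidedCategory in
lemma stmt9_aux2 :
    (𝟙 (xd ⊗ y) ⊗≫ xd ◁ (y ◁ η_ x xd) ⊗≫ xd ◁ ((β_ y x).hom ▷ xd) ⊗≫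
      ε_ x xd ▷ (y ⊗ xd) ⊗≫ 𝟙 (y ⊗ xd)) ≫ (β_ y xd).hom = 𝟙 (xd ⊗ y) := by
  calc
    _ = 𝟙 (xd ⊗ y) ⊗≫ xd ◁ (y ◁ η_ x xd) ⊗≫ xd ◁ ((β_ y x).hom ▷ xd) ⊗≫
        (ε_ x xd ▷ (y ⊗ xd) ≫ 𝟙_ B' ◁ (β_ y xd).hom) ⊗≫ 𝟙 (xd ⊗ y) := by
      monoidal
    _ = 𝟙 (xd ⊗ y) ⊗≫ xd ◁ (y ◁ η_ x xd) ⊗≫ xd ◁ ((β_ y x).hom ▷ xd) ⊗≫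
        ((xd ⊗ x) ◁ (β_ y xd).hom ≫ ε_ x xd ▷ (xd ⊗ y)) ⊗≫ 𝟙 (xd ⊗ y) := by
      rw [← whisker_exchange]
    _ = 𝟙 (xd ⊗ y) ⊗≫ xd ◁ (y ◁ η_ x xd ≫ (β_ y (x ⊗ xd)).hom) ⊗≫
        ε_ x xd ▷ (xd ⊗ y) ⊗≫ 𝟙 (xd ⊗ y) := by
      rw [braiding_tensor_right_hom]
      monoidal
    _ = 𝟙 (xd ⊗ y) ⊗≫ xd ◁ ((β_ y (𝟙_ B')).hom ≫ η_ x xd ▷ y) ⊗≫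
        ε_ x xd ▷ (xd ⊗ y) ⊗≫ 𝟙 (xd ⊗ y) := by
      rw [braiding_naturality_right]
    _ = 𝟙 (xd ⊗ y) ⊗≫ (xd ◁ η_ x xd ≫ (α_ xd x xd).inv ≫ ε_ x xd ▷ xd) ▷ y ⊗≫
        𝟙 (xd ⊗ y) := by
      rw [braiding_tensorUnit_right]
      monoidal
    _ = 𝟙 (xd ⊗ y) := by
      rw [ExactPairing.coevaluation_evaluation]
      monoidal

open Category BraidedCategory in
lemma stmt9_aux1 :
    (𝟙 (xd ⊗ y) ⊗≫ xd ◁ (y ◁ η_ x xd) ⊗≫ xd ◁ ((β_ x y).inv ▷ xd) ⊗≫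
      ε_ x xd ▷ (y ⊗ xd) ⊗≫ 𝟙 (y ⊗ xd)) = (β_ xd y).hom := by
  rw [← cancel_mono (β_ xd y).inv, Iso.hom_inv_id]
  calc
    _ = 𝟙 (xd ⊗ y) ⊗≫ xd ◁ (y ◁ η_ x xd) ⊗≫ xd ◁ ((β_ x y).inv ▷ xd) ⊗≫
        (ε_ x xd ▷ (y ⊗ xd) ≫ 𝟙_ B' ◁ (β_ xd y).inv) ⊗≫ 𝟙 (xd ⊗ y) := by
      monoidal
    _ = 𝟙 (xd ⊗ y) ⊗≫ xd ◁ (y ◁ η_ x xd) ⊗≫ xd ◁ ((β_ x y).inv ▷ xd) ⊗≫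
        ((xd ⊗ x) ◁ (β_ xd y).inv ≫ ε_ x xd ▷ (xd ⊗ y)) ⊗≫ 𝟙 (xd ⊗ y) := by
      rw [← whisker_exchange]
    _ = 𝟙 (xd ⊗ y) ⊗≫ xd ◁ (y ◁ η_ x xd ≫ (β_ (x ⊗ xd) y).inv) ⊗≫
        ε_ x xd ▷ (xd ⊗ y) ⊗≫ 𝟙 (xd ⊗ y) := by
      rw [braiding_tensor_left_inv]
      monoidal
    _ = 𝟙 (xd ⊗ y) ⊗≫ xd ◁ ((β_ (𝟙_ B') y).inv ≫ η_ x xd ▷ y) ⊗≫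
        ε_ x xd ▷ (xd ⊗ y) ⊗≫ 𝟙 (xd ⊗ y) := by
      rw [braiding_inv_naturality_right]
    _ = 𝟙 (xd ⊗ y) ⊗≫ (xd ◁ η_ x xd ≫ (α_ xd x xd).inv ≫ ε_ x xd ▷ xd) ▷ y ⊗≫
        𝟙 (xd ⊗ y) := by
      rw [braiding_inv_tensorUnit_left]
      monoidal
    _ = 𝟙 (xd ⊗ y) := by
      rw [ExactPairing.coevaluation_evaluation]
      monoidal

end

/-- In a braided monoidal category, if `x` has a left dual `xd`
(witnessed by an exact pairing) and `x` lies in the Müger center (the double braiding of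
`x` with every object is the identity), then `xd` also lies in the Müger center. -/
theorem stmt_9 {B : Type*} [Category B] [MonoidalCategory B] [BraidedCategory B]
    (x xd : B) [ExactPairing x xd]
    (hx : ∀ y : B, (β_ x y).hom ≫ (β_ y x).hom = 𝟙 (x ⊗ y)) :
    ∀ y : B, (β_ xd y).hom ≫ (β_ y xd).hom = 𝟙 (xd ⊗ y) := by
  intro y
  have hyx : (β_ y x).hom = (β_ x y).inv := by
    rw [← Category.comp_id (β_ x y).inv, ← hx y, Iso.inv_hom_id_assoc]
  have h2 := stmt9_aux2 x xd y
  rw [hyx] at h2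
  rw [← stmt9_aux1 x xd y]
  exact h2
end

section
/- Let C be a monoidal category and A a monoid object in C. There is a monoidal functor from the reverse monoidal category C^rev to the category of C-linear endofunctors of the category of right A-modules, sending an object x to the functor M ↦ x ⊗ M (with right A-action id_x ⊗ n^M). -/
open CategoryTheory MonoidalCategory Limits

variable {C : Type*} [Category C] [MonoidalCategory C]

/-- A right module over a monoid object `A` in a monoidal category. -/
structure RMod (A : Mon C) where
  X : C
  act : X ⊗ A.X ⟶ X
  act_one : X ◁ MonObj.one (X := A.X) ≫ act = (ρ_ X).hom
  act_mul : act ▷ A.X ≫ act = (α_ X A.X A.X).hom ≫ X ◁ MonObj.mul (X := A.X) ≫ act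

/-- A morphism of right `A`-modules. -/
@[ext]
structure RModHom {A : Mon C} (M N : RMod A) where
  f : M.X ⟶ N.X
  comm : M.act ≫ f = f ▷ A.X ≫ N.act

instance (A : Mon C) : Category (RMod A) where
  Hom := RModHom
  id M := ⟨𝟙 M.X, by simp⟩
  comp {M N P} g h := ⟨g.f ≫ h.f, by
    rw [← Category.assoc, g.comm, Category.assoc, h.comm, comp_whiskerRight,
      Category.assoc]⟩
  id_comp f := by apply RModHom.ext; simp
  comp_id f := by apply RModHom.ext; simp
  assoc f g h := by apply RModHom.ext; simp

/-- The regular right `A`-module. -/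
def RMod.regular (A : Mon C) : RMod A :=
  ⟨A.X, MonObj.mul (X := A.X), MonObj.mul_one A.X, MonObj.mul_assoc A.X⟩

attribute [local instance] CategoryTheory.endofunctorMonoidalCategory

open MonoidalOpposite

namespace Stmt13Aux

variable {A : Mon C}

@[simp] lemma comp_f {M N P : RMod A} (g : M ⟶ N) (h : N ⟶ P) :
    (g ≫ h).f = g.f ≫ h.f := rfl

@[simp] lemma id_f (M : RMod A) : (𝟙 M : RModHom M M).f = 𝟙 M.X := rfl

@[simps, reducible] def tObj (x : C) (M : RMod A) : RMod A where
  X := x ⊗ M.X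
  act := (α_ x M.X A.X).hom ≫ x ◁ M.act
  act_one := by
    rw [associator_naturality_right_assoc, ← MonoidalCategory.whiskerLeft_comp, M.act_one]
    simp
  act_mul := by
    simp only [comp_whiskerRight, Category.assoc, associator_naturality_middle_assoc,
      associator_naturality_right_assoc]
    rw [← MonoidalCategory.whiskerLeft_comp x (M.act ▷ A.X) M.act, M.act_mul]
    simp only [MonoidalCategory.whiskerLeft_comp, pentagon_assoc, Category.assoc]

@[simps, reducible] def tMap (x : C) {M N : RMod A} (g : M ⟶ N) : tObj x M ⟶ tObj x N where
  f := x ◁ g.f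
  comm := by
    dsimp
    rw [Category.assoc, ← MonoidalCategory.whiskerLeft_comp, g.comm,
      MonoidalCategory.whiskerLeft_comp, associator_naturality_middle_assoc]

@[simps, reducible] def FObj (x : C) : RMod A ⥤ RMod A where
  obj := tObj x
  map := tMap x
  map_id M := by apply RModHom.ext; simp
  map_comp g h := by apply RModHom.ext; simp

/-- Build an iso of modules from an iso of underlying objects compatible with the action. -/
@[simps, reducible] def mkIso {M N : RMod A} (e : M.X ≅ N.X) (he : M.act ≫ e.hom = e.hom ▷ A.X ≫ N.act) :
    M ≅ N where
  hom := ⟨e.hom, he⟩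
  inv := ⟨e.inv, by
    rw [Iso.comp_inv_eq, Category.assoc, he, ← comp_whiskerRight_assoc,
      Iso.inv_hom_id, MonoidalCategory.id_whiskerRight, Category.id_comp]⟩
  hom_inv_id := by apply RModHom.ext; simp
  inv_hom_id := by apply RModHom.ext; simp

variable (A) in
@[simps, reducible] def F : Cᴹᵒᵖ ⥤ (RMod A ⥤ RMod A) where
  obj x := FObj x.unmop
  map {x y} g :=
    { app := fun M => ⟨g.unmop ▷ M.X, by
        dsimp
        rw [Category.assoc, whisker_exchange, associator_naturality_left_assoc]⟩
      naturality := fun M N h => by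
        apply RModHom.ext
        dsimp
        rw [whisker_exchange] }
  map_id x := by apply NatTrans.ext; funext M; apply RModHom.ext; simp
  map_comp g h := by apply NatTrans.ext; funext M; apply RModHom.ext; simp

variable (A) in
set_option maxHeartbeats 1600000 in
def core : (F A).CoreMonoidal where
  εIso := NatIso.ofComponents
    (fun M => mkIso (λ_ M.X).symm (by
      dsimp
      rw [leftUnitor_inv_naturality]
      simp only [← Category.assoc]
      congr 1
      monoidal))
    (fun {M N} h => by
      apply RModHom.ext
      dsimp
      rw [leftUnitor_inv_naturality])
  μIso x y := NatIso.ofComponents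
    (fun M => mkIso (α_ y.unmop x.unmop M.X).symm (by
      dsimp
      simp only [MonoidalCategory.whiskerLeft_comp, Category.assoc]
      rw [associator_inv_naturality_right]
      simp only [← Category.assoc]
      congr 1
      monoidal))
    (fun {M N} h => by
      apply RModHom.ext
      dsimp
      rw [associator_inv_naturality_right])
  μIso_hom_natural_left := by
    intro x y g z
    apply NatTrans.ext; funext M; apply RModHom.ext
    dsimp
    rw [associator_inv_naturality_middle]
  μIso_hom_natural_right := by
    intro x y z g
    apply NatTrans.ext; funext M; apply RModHom.ext
    dsimp
    rw [associator_inv_naturality_left]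
  associativity := by
    intro x y z
    apply NatTrans.ext; funext M; apply RModHom.ext
    dsimp
    monoidal
  left_unitality := by
    intro x
    apply NatTrans.ext; funext M; apply RModHom.ext
    dsimp
    monoidal
  right_unitality := by
    intro x
    apply NatTrans.ext; funext M; apply RModHom.ext
    dsimp
    monoidal

end Stmt13Aux

/-- Let `C` be a monoidal category and `A` a monoid object in `C`.  There is
a monoidal functor from the reverse monoidal category `Cᴹᵒᵖ` to the monoidal category of
endofunctors of the category of right `A`-modules (with composition as tensor product),
sending an object `x` to the functor `M ↦ x ⊗ M` (with right `A`-action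
`(α_ x M A).hom ≫ x ◁ n^M`). -/
theorem stmt_13 {C : Type*} [Category C] [MonoidalCategory C] (A : Mon C) :
    ∃ (F : Cᴹᵒᵖ ⥤ (RMod A ⥤ RMod A)) (_ : F.Monoidal),
      ∀ (x : C) (M : RMod A),
        ((F.obj (mop x)).obj M).X = x ⊗ M.X ∧
        HEq ((F.obj (mop x)).obj M).act ((α_ x M.X A.X).hom ≫ x ◁ M.act) := by
  exact ⟨Stmt13Aux.F A, (Stmt13Aux.core A).toMonoidal, fun x M => ⟨rfl, HEq.rfl⟩⟩
end
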